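/- The function g₁ is strictly increasing on the interval [0, 2): for all real V₁, V₂ with 0 ≤ V₁ < V₂ < 2, g₁(V₁) < g₁(V₂). -/

import Mathlib

open Real

/-- First branch of Gupta et al.'s helper function `f`. -/
noncomputable def g1 (V : ℝ) : ℝ := Real.log ((2 + V) / (2 - V)) - 2 * V / (2 + V)

lemma g1_hasDerivAt {x : ℝ} (hx0 : -2 < x) (hx2 : x < 2) :
    HasDerivAt g1 (4 / ((2 - x) * (2 + x)) - 4 / (2 + x) ^ 2) x := by
  have h2p : (0:ℝ) < 2 + x := by linarith
  have h2m : (0:ℝ) < 2 - x := by linarith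
  have hnum : HasDerivAt (fun V : ℝ => 2 + V) 1 x := by
    simpa using (hasDerivAt_id x).const_add 2
  have hden : HasDerivAt (fun V : ℝ => 2 - V) (-1) x := by
    simpa using (hasDerivAt_id x).const_sub 2
  have hq : HasDerivAt (fun V : ℝ => (2 + V) / (2 - V))
      ((1 * (2 - x) - (2 + x) * (-1)) / (2 - x) ^ 2) x :=
    hnum.div hden h2m.ne'
  have hlog : HasDerivAt (fun V : ℝ => Real.log ((2 + V) / (2 - V)))
      (((1 * (2 - x) - (2 + x) * (-1)) / (2 - x) ^ 2) / ((2 + x) / (2 - x))) x :=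
    hq.log (by positivity)
  have hr : HasDerivAt (fun V : ℝ => 2 * V / (2 + V))
      ((2 * (2 + x) - 2 * x * 1) / (2 + x) ^ 2) x := by
    have h1 : HasDerivAt (fun V : ℝ => 2 * V) 2 x := by
      simpa using (hasDerivAt_id x).const_mul 2
    exact h1.div hnum h2p.ne'
  have := hlog.sub hr
  refine (this : HasDerivAt g1 _ x).congr_deriv ?_
  field_simp
  ring

/-- `g₁` is strictly increasing on `[0, 2)`. -/
theorem g1_strictMonoOn :
    ∀ V₁ V₂ : ℝ, 0 ≤ V₁ → V₁ < V₂ → V₂ < 2 → g1 V₁ < g1 V₂ := by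
  have key : StrictMonoOn g1 (Set.Ico (0:ℝ) 2) := by
    apply strictMonoOn_of_deriv_pos (convex_Ico 0 2)
    · intro x hx
      obtain ⟨hx0, hx2⟩ := hx
      exact (g1_hasDerivAt (by linarith) hx2).continuousAt.continuousWithinAt
    · intro x hx
      rw [interior_Ico] at hx
      obtain ⟨hx0, hx2⟩ := hx
      rw [(g1_hasDerivAt (by linarith) hx2).deriv]
      have h2p : (0:ℝ) < 2 + x := by linarith
      have h2m : (0:ℝ) < 2 - x := by linarith
      rw [div_sub_div _ _ (by positivity) (by positivity), div_pos_iff]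
      left
      constructor
      · nlinarith
      · positivity
  intro V₁ V₂ h0 h12 h22
  exact key ⟨h0, by linarith⟩ ⟨by linarith, h22⟩ h12
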